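/- Let g be nondecreasing on [0,1] and suppose g ∈ A_n where A_n includes all intervals of consecutive design points. Then for each design point t_i, g(t_i) ≥ max_{0 ≤ k ≤ i−1} [ (1/(k+1))Σ_{j=0}^{k} y(t_{i−j}) − σ√(3 log n/(k+1)) ] and g(t_i) ≤ min_{0 ≤ k ≤ n−i} [ (1/(k+1))Σ_{j=0}^{k} y(t_{i+j}) + σ√(3 log n/(k+1)) ]. -/

import Mathlib

/-- fast honest bounds for monotone functions: if `g` is nondecreasing on
`[0,1]` and belongs to `A_n` (all intervals of consecutive design points), then at each
design point `t_i` the value `g(t_i)` lies above every left-block lower bound and below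
every right-block upper bound. -/
theorem stmt11 (n : ℕ) (hn : 2 ≤ n) (σ : ℝ) (hσ : 0 < σ)
    (y : ℕ → ℝ) (g : ℝ → ℝ) (hg : MonotoneOn g (Set.Icc (0 : ℝ) 1))
    (hA : ∀ a b : ℕ, 1 ≤ a → a ≤ b → b ≤ n →
      |∑ j ∈ Finset.Icc a b, (y j - g ((j : ℝ) / n))| ≤
        σ * Real.sqrt (3 * Real.log n) * Real.sqrt ((b : ℝ) - a + 1)) :
    ∀ i : ℕ, 1 ≤ i → i ≤ n →
      (∀ k : ℕ, k ≤ i - 1 →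
        g ((i : ℝ) / n) ≥
          (∑ j ∈ Finset.range (k + 1), y (i - j)) / (k + 1) -
            σ * Real.sqrt (3 * Real.log n / (k + 1))) ∧
      (∀ k : ℕ, k ≤ n - i →
        g ((i : ℝ) / n) ≤
          (∑ j ∈ Finset.range (k + 1), y (i + j)) / (k + 1) +
            σ * Real.sqrt (3 * Real.log n / (k + 1))) := by
  intro i hi1 hin
  have hn0 : (0:ℝ) < n := by positivity
  have hlog : (0:ℝ) ≤ 3 * Real.log n := by
    have : (0:ℝ) ≤ Real.log n := Real.log_nonneg (by exact_mod_cast Nat.one_le_of_lt hn)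
    linarith
  set c : ℝ := σ * Real.sqrt (3 * Real.log n) with hc
  have hc0 : 0 ≤ c := by positivity
  clear_value c
  -- membership of design points in [0,1]
  have hmem : ∀ j : ℕ, j ≤ n → (j : ℝ) / n ∈ Set.Icc (0:ℝ) 1 := by
    intro j hj
    constructor
    · positivity
    · rw [div_le_one hn0]; exact_mod_cast hj
  -- rewrite the target sqrt
  have hsq : ∀ k : ℕ, σ * Real.sqrt (3 * Real.log n / (k + 1)) =
      c / Real.sqrt ((k:ℝ) + 1) := by
    intro k
    rw [Real.sqrt_div hlog, hc, mul_div_assoc]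
  constructor
  · -- lower bound
    intro k hk
    have hki : k + 1 ≤ i := by omega
    have hS : ∑ j ∈ Finset.range (k + 1), y (i - j) =
        ∑ j ∈ Finset.Icc (i - k) i, y j := by
      rw [← Finset.Ico_add_one_right_eq_Icc, Finset.sum_Ico_eq_sum_range]
      have h1 : i + 1 - (i - k) = k + 1 := by omega
      rw [h1]
      rw [← Finset.sum_range_reflect]
      apply Finset.sum_congr rfl
      intro j hj
      simp only [Finset.mem_range] at hj
      congr 1
      omega
    have hA' := hA (i - k) i (by omega) (by omega) hin
    have hcast : ((i:ℝ) - ((i - k : ℕ):ℝ) + 1) = (k:ℝ) + 1 := by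
      have h2 : (((i - k : ℕ)):ℝ) = (i:ℝ) - (k:ℝ) := by
        have : k ≤ i := by omega
        push_cast [this]
        ring
      rw [h2]; ring
    rw [hcast] at hA'
    have habs := (abs_le.mp hA').2
    rw [Finset.sum_sub_distrib] at habs
    -- g sum bound
    have hgsum : ∑ j ∈ Finset.Icc (i - k) i, g ((j:ℝ)/n) ≤ ((k:ℝ)+1) * g ((i:ℝ)/n) := by
      have hcard : (Finset.Icc (i - k) i).card = k + 1 := by
        rw [Nat.card_Icc]; omega
      calc ∑ j ∈ Finset.Icc (i - k) i, g ((j:ℝ)/n)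
          ≤ ∑ _j ∈ Finset.Icc (i - k) i, g ((i:ℝ)/n) := by
            apply Finset.sum_le_sum
            intro j hj
            simp only [Finset.mem_Icc] at hj
            have hji : (j:ℝ) ≤ (i:ℝ) := by exact_mod_cast hj.2
            exact hg (hmem j (by omega)) (hmem i hin) (by gcongr)
        _ = ((k:ℝ)+1) * g ((i:ℝ)/n) := by
            rw [Finset.sum_const, hcard, nsmul_eq_mul]; push_cast; ring
    -- combine
    have key : ∑ j ∈ Finset.Icc (i - k) i, y j ≤
        ((k:ℝ)+1) * g ((i:ℝ)/n) + c * Real.sqrt ((k:ℝ)+1) := by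
      nlinarith [habs, hgsum]
    rw [hS, hsq k]
    have hs0 : (0:ℝ) < Real.sqrt ((k:ℝ)+1) := Real.sqrt_pos.mpr (by positivity)
    have hss : Real.sqrt ((k:ℝ)+1) * Real.sqrt ((k:ℝ)+1) = (k:ℝ)+1 :=
      Real.mul_self_sqrt (by positivity)
    have h3 : c / Real.sqrt ((k:ℝ)+1) * ((k:ℝ)+1) = c * Real.sqrt ((k:ℝ)+1) := by
      field_simp; rw [sq, hss]
    have h2 : (∑ j ∈ Finset.Icc (i - k) i, y j) / ((k:ℝ)+1) ≤
        g ((i:ℝ)/n) + c / Real.sqrt ((k:ℝ)+1) := by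
      rw [div_le_iff₀ (by positivity : (0:ℝ) < (k:ℝ)+1)]
      nlinarith [key, h3]
    linarith
  · -- upper bound
    intro k hk
    have hkn : i + k ≤ n := by omega
    have hS : ∑ j ∈ Finset.range (k + 1), y (i + j) =
        ∑ j ∈ Finset.Icc i (i + k), y j := by
      rw [← Finset.Ico_add_one_right_eq_Icc, Finset.sum_Ico_eq_sum_range]
      have h1 : i + k + 1 - i = k + 1 := by omega
      rw [h1]
    have hA' := hA i (i + k) hi1 (by omega) hkn
    have hcast : (((i + k : ℕ)):ℝ) - (i:ℝ) + 1 = (k:ℝ) + 1 := by push_cast; ring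
    rw [hcast] at hA'
    have habs := (abs_le.mp hA').1
    rw [Finset.sum_sub_distrib] at habs
    have hgsum : ((k:ℝ)+1) * g ((i:ℝ)/n) ≤ ∑ j ∈ Finset.Icc i (i + k), g ((j:ℝ)/n) := by
      have hcard : (Finset.Icc i (i + k)).card = k + 1 := by
        rw [Nat.card_Icc]; omega
      calc ((k:ℝ)+1) * g ((i:ℝ)/n)
          = ∑ _j ∈ Finset.Icc i (i + k), g ((i:ℝ)/n) := by
            rw [Finset.sum_const, hcard, nsmul_eq_mul]; push_cast; ring
        _ ≤ ∑ j ∈ Finset.Icc i (i + k), g ((j:ℝ)/n) := by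
            apply Finset.sum_le_sum
            intro j hj
            simp only [Finset.mem_Icc] at hj
            have hji : (i:ℝ) ≤ (j:ℝ) := by exact_mod_cast hj.1
            exact hg (hmem i hin) (hmem j (by omega)) (by gcongr)
    have key : ((k:ℝ)+1) * g ((i:ℝ)/n) - c * Real.sqrt ((k:ℝ)+1) ≤
        ∑ j ∈ Finset.Icc i (i + k), y j := by
      nlinarith [habs, hgsum]
    rw [hS, hsq k]
    have hs0 : (0:ℝ) < Real.sqrt ((k:ℝ)+1) := Real.sqrt_pos.mpr (by positivity)
    have hss : Real.sqrt ((k:ℝ)+1) * Real.sqrt ((k:ℝ)+1) = (k:ℝ)+1 :=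
      Real.mul_self_sqrt (by positivity)
    have h3 : c / Real.sqrt ((k:ℝ)+1) * ((k:ℝ)+1) = c * Real.sqrt ((k:ℝ)+1) := by
      field_simp; rw [sq, hss]
    have h2 : g ((i:ℝ)/n) - c / Real.sqrt ((k:ℝ)+1) ≤
        (∑ j ∈ Finset.Icc i (i + k), y j) / ((k:ℝ)+1) := by
      rw [le_div_iff₀ (by positivity : (0:ℝ) < (k:ℝ)+1)]
      nlinarith [key, h3]
    linarith
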